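/- For every infinite cardinal κ: κ is a caliber for βω if and only if cf(κ) > ω; κ is a precaliber for βω if and only if cf(κ) > ω; and κ is a weak precaliber for βω if and only if cf(κ) > ω. (Here βω is the Stone–Čech compactification of the discrete space of natural numbers.) -/

import Mathlib

open Cardinal Set

universe u

/-- `κ` is a caliber for `X`: every κ-indexed family of non-empty open sets
(repetitions allowed) has a κ-sized subfamily with non-empty intersection. -/
def IsCaliber (X : Type u) [TopologicalSpace X] (κ : Cardinal.{u}) : Prop :=
  ∀ {ι : Type u} (U : ι → Set X), #ι = κ → (∀ i, IsOpen (U i)) → (∀ i, (U i).Nonempty) →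
    ∃ J : Set ι, #J = κ ∧ (⋂ i ∈ J, U i).Nonempty

/-- `κ` is a precaliber for `X`: every κ-indexed family of non-empty open sets
has a κ-sized subfamily which is centered. -/
def IsPrecaliber (X : Type u) [TopologicalSpace X] (κ : Cardinal.{u}) : Prop :=
  ∀ {ι : Type u} (U : ι → Set X), #ι = κ → (∀ i, IsOpen (U i)) → (∀ i, (U i).Nonempty) →
    ∃ J : Set ι, #J = κ ∧
      ∀ s : Finset ι, ↑s ⊆ J → s.Nonempty → (⋂ i ∈ s, U i).Nonempty

/-- `κ` is a weak precaliber for `X`: every κ-indexed family of non-empty open sets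
has a κ-sized subfamily which is linked. -/
def IsWeakPrecaliber (X : Type u) [TopologicalSpace X] (κ : Cardinal.{u}) : Prop :=
  ∀ {ι : Type u} (U : ι → Set X), #ι = κ → (∀ i, IsOpen (U i)) → (∀ i, (U i).Nonempty) →
    ∃ J : Set ι, #J = κ ∧ ∀ i ∈ J, ∀ j ∈ J, (U i ∩ U j).Nonempty

/-- `κ` is a caliber* for `X`: every family of non-empty open sets of cardinality `κ`
has a subfamily of cardinality `κ` with non-empty intersection. -/
def IsCaliberStar (X : Type u) [TopologicalSpace X] (κ : Cardinal.{u}) : Prop :=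
  ∀ 𝒰 : Set (Set X), #𝒰 = κ → (∀ U ∈ 𝒰, IsOpen U) → (∀ U ∈ 𝒰, U.Nonempty) →
    ∃ 𝒱 ⊆ 𝒰, #𝒱 = κ ∧ (⋂₀ 𝒱).Nonempty

/-- `κ` is a precaliber* for `X`: every family of non-empty open sets of cardinality `κ`
has a centered subfamily of cardinality `κ`. -/
def IsPrecaliberStar (X : Type u) [TopologicalSpace X] (κ : Cardinal.{u}) : Prop :=
  ∀ 𝒰 : Set (Set X), #𝒰 = κ → (∀ U ∈ 𝒰, IsOpen U) → (∀ U ∈ 𝒰, U.Nonempty) →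
    ∃ 𝒱 ⊆ 𝒰, #𝒱 = κ ∧
      ∀ s : Finset (Set X), ↑s ⊆ 𝒱 → s.Nonempty → (⋂₀ (↑s : Set (Set X))).Nonempty

/-- `κ` is a weak precaliber* for `X`: every family of non-empty open sets of
cardinality `κ` has a linked subfamily of cardinality `κ`. -/
def IsWeakPrecaliberStar (X : Type u) [TopologicalSpace X] (κ : Cardinal.{u}) : Prop :=
  ∀ 𝒰 : Set (Set X), #𝒰 = κ → (∀ U ∈ 𝒰, IsOpen U) → (∀ U ∈ 𝒰, U.Nonempty) →
    ∃ 𝒱 ⊆ 𝒰, #𝒱 = κ ∧ ∀ U ∈ 𝒱, ∀ V ∈ 𝒱, (U ∩ V).Nonempty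

/-- `o X` : the number of open subsets of `X`. -/
def oCard (X : Type u) [TopologicalSpace X] : Cardinal.{u} :=
  #{U : Set X | IsOpen U}

/-- A cellular family: a pairwise disjoint collection of non-empty open sets. -/
def IsCellularFamily (X : Type u) [TopologicalSpace X] (𝒰 : Set (Set X)) : Prop :=
  (∀ U ∈ 𝒰, IsOpen U) ∧ (∀ U ∈ 𝒰, U.Nonempty) ∧ 𝒰.Pairwise Disjoint


section StoneCechAux

theorem isOpen_singleton_stoneCechUnit (n : ℕ) :
    IsOpen ({stoneCechUnit n} : Set (StoneCech ℕ)) := by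
  classical
  let f : ℕ → Bool := fun m => decide (m = n)
  have hf : Continuous f := continuous_of_discreteTopology
  let g := stoneCechExtend hf
  have hg : Continuous g := continuous_stoneCechExtend hf
  have hgu : ∀ m, g (stoneCechUnit m) = f m := fun m =>
    congrFun (stoneCechExtend_extends hf) m
  have hU : IsOpen (g ⁻¹' {true}) := (isOpen_discrete _).preimage hg
  have hsub : g ⁻¹' {true} ⊆ {stoneCechUnit n} := by
    have h1 : g ⁻¹' {true} ⊆ closure (g ⁻¹' {true} ∩ Set.range stoneCechUnit) :=
      denseRange_stoneCechUnit.open_subset_closure_inter hU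
    have h2 : g ⁻¹' {true} ∩ Set.range stoneCechUnit ⊆ {stoneCechUnit n} := by
      rintro x ⟨hx, m, rfl⟩
      have : f m = true := by rw [← hgu m]; exact hx
      simp only [f, decide_eq_true_eq] at this
      simp [this]
    refine fun x hx => ?_
    have h3 : closure (g ⁻¹' {true} ∩ Set.range stoneCechUnit) ⊆ closure {stoneCechUnit n} :=
      closure_mono h2
    simpa using h3 (h1 hx)
  have heq : g ⁻¹' {true} = {stoneCechUnit n} := by
    apply Subset.antisymm hsub
    intro x hx
    simp only [mem_singleton_iff] at hx
    subst hx
    simp [mem_preimage, hgu, f]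
  rw [← heq]; exact hU

theorem stoneCechUnit_nat_inj {m n : ℕ} (h : stoneCechUnit m = stoneCechUnit n) : m = n := by
  classical
  let f : ℕ → Bool := fun k => decide (k = n)
  have hf : Continuous f := continuous_of_discreteTopology
  have hgu : ∀ k, stoneCechExtend hf (stoneCechUnit k) = f k := fun k =>
    congrFun (stoneCechExtend_extends hf) k
  have := (hgu m).symm.trans (by rw [h, hgu])
  simpa [f] using this

theorem caliber_of_aleph0_lt_cof {κ : Cardinal.{0}} (h : ℵ₀ < κ.ord.cof) :
    IsCaliber (StoneCech ℕ) κ := by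
  classical
  intro ι U hι hop hne
  have hκ : ℵ₀ < κ := h.trans_le (Ordinal.cof_ord_le κ)
  have hmem : ∀ i, ∃ n, stoneCechUnit n ∈ U i := fun i =>
    denseRange_stoneCechUnit.exists_mem_open (hop i) (hne i)
  choose g hg using hmem
  by_cases hfib : ∃ n, κ ≤ #(g ⁻¹' {n})
  · obtain ⟨n, hn⟩ := hfib
    refine ⟨g ⁻¹' {n}, le_antisymm (hι ▸ mk_set_le _) hn, ⟨stoneCechUnit n, ?_⟩⟩
    simp only [mem_iInter]
    intro i hi
    have hgi : g i = n := hi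
    exact hgi ▸ hg i
  · exfalso
    push_neg at hfib
    have hsum : #ι = Cardinal.sum fun n => #(g ⁻¹' {n}) := by
      rw [← mk_sigma]
      exact mk_congr (Equiv.sigmaFiberEquiv g).symm
    have h1 : Cardinal.sum (fun n => #(g ⁻¹' {n})) ≤ #ℕ * ⨆ n, #(g ⁻¹' {n}) :=
      Cardinal.sum_le_mk_mul_iSup _
    have h2 : (⨆ n, #(g ⁻¹' {n})) < κ :=
      Ordinal.iSup_lt (by rwa [mk_nat]) hfib
    have h3 : #ℕ * (⨆ n, #(g ⁻¹' {n})) < κ :=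
      Cardinal.mul_lt_of_lt hκ.le (by rwa [mk_nat]) h2
    have : κ < κ := by
      calc κ = #ι := hι.symm
        _ = Cardinal.sum fun n => #(g ⁻¹' {n}) := hsum
        _ ≤ #ℕ * ⨆ n, #(g ⁻¹' {n}) := h1
        _ < κ := h3
    exact lt_irrefl κ this

theorem not_weakPrecaliber_of_cof_le {κ : Cardinal.{0}} (hκ : ℵ₀ ≤ κ) (h : κ.ord.cof ≤ ℵ₀) :
    ¬ IsWeakPrecaliber (StoneCech ℕ) κ := by
  classical
  intro hW
  haveI : IsWellOrder κ.ord.ToType (· < ·) := isWellOrder_lt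
  obtain ⟨S, hSu, hScard⟩ :=
    Order.exists_cof_eq κ.ord.ToType
  rw [Ordinal.cof_toType] at hScard
  have hSle : #S ≤ ℵ₀ := hScard.le.trans h
  obtain ⟨e⟩ : Nonempty (S ↪ ℕ) := by
    rw [← Cardinal.le_def, mk_nat]; exact hSle
  have hx : ∀ x : κ.ord.ToType, ∃ s : S, x ≤ (s : κ.ord.ToType) := by
    intro x
    obtain ⟨b, hb, hnb⟩ := hSu x
    exact ⟨⟨b, hb⟩, hnb⟩
  choose σ hσ using hx
  set U : κ.ord.ToType → Set (StoneCech ℕ) := fun x => {stoneCechUnit (e (σ x))} with hU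
  have hcard : #κ.ord.ToType = κ := Cardinal.mk_ord_toType κ
  obtain ⟨J, hJ, hlink⟩ := hW U hcard (fun x => isOpen_singleton_stoneCechUnit _)
    (fun x => ⟨_, rfl⟩)
  have hJne : J.Nonempty := by
    rw [← Set.nonempty_coe_sort, ← Cardinal.mk_ne_zero_iff, hJ]
    intro h0
    rw [h0] at hκ
    exact Cardinal.aleph0_ne_zero (le_antisymm hκ (zero_le (a := ℵ₀)))
  obtain ⟨i0, hi0⟩ := hJne
  have hconst : ∀ j ∈ J, σ j = σ i0 := by
    intro j hj
    obtain ⟨z, hz1, hz2⟩ := hlink j hj i0 hi0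
    simp only [hU, mem_singleton_iff] at hz1 hz2
    exact e.injective (stoneCechUnit_nat_inj (hz1 ▸ hz2))
  have hsub : J ⊆ Set.Iic ((σ i0 : S) : κ.ord.ToType) := by
    intro j hj
    exact (hσ j).trans_eq (by rw [hconst j hj])
  have hIic : #(Set.Iic ((σ i0 : S) : κ.ord.ToType)) < κ := by
    rw [← Set.Iio_insert]
    refine (Cardinal.mk_insert_le).trans_lt ?_
    exact Cardinal.add_lt_of_lt hκ (Cardinal.mk_Iio_ord_toType _)
      (lt_of_lt_of_le (by norm_num) hκ)
  exact absurd hJ (by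
    intro hc
    exact absurd ((Cardinal.mk_le_mk_of_subset hsub).trans_lt hIic)
      (by rw [hc]; exact lt_irrefl κ))

theorem precaliber_of_caliber {X : Type u} [TopologicalSpace X] {κ : Cardinal.{u}}
    (h : IsCaliber X κ) : IsPrecaliber X κ := by
  intro ι U hι hop hne
  obtain ⟨J, hJ, x, hx⟩ := h U hι hop hne
  refine ⟨J, hJ, fun s hs _ => ⟨x, ?_⟩⟩
  simp only [mem_iInter]
  intro i hi
  simp only [mem_iInter] at hx
  exact hx i (hs hi)

theorem weakPrecaliber_of_precaliber {X : Type u} [TopologicalSpace X] {κ : Cardinal.{u}}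
    (h : IsPrecaliber X κ) : IsWeakPrecaliber X κ := by
  classical
  intro ι U hι hop hne
  obtain ⟨J, hJ, hcent⟩ := h U hι hop hne
  refine ⟨J, hJ, fun i hi j hj => ?_⟩
  obtain ⟨x, hx⟩ := hcent {i, j} (by
      intro k hk
      simp only [Finset.coe_insert, Finset.coe_singleton, mem_insert_iff,
        mem_singleton_iff] at hk
      rcases hk with rfl | rfl
      exacts [hi, hj])
    ⟨i, by simp⟩
  simp only [mem_iInter, Finset.mem_insert, Finset.mem_singleton] at hx
  exact ⟨x, hx i (Or.inl rfl), hx j (Or.inr rfl)⟩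

end StoneCechAux

theorem stmt10 (κ : Cardinal.{0}) (hκ : ℵ₀ ≤ κ) :
    (IsCaliber (StoneCech ℕ) κ ↔ ℵ₀ < κ.ord.cof) ∧
    (IsPrecaliber (StoneCech ℕ) κ ↔ ℵ₀ < κ.ord.cof) ∧
    (IsWeakPrecaliber (StoneCech ℕ) κ ↔ ℵ₀ < κ.ord.cof) := by
  constructor
  · constructor
    · intro hc
      by_contra hcof
      exact not_weakPrecaliber_of_cof_le hκ (not_lt.1 hcof)
        (weakPrecaliber_of_precaliber (precaliber_of_caliber hc))
    · exact fun h => caliber_of_aleph0_lt_cof h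
  constructor
  · constructor
    · intro hc
      by_contra hcof
      exact not_weakPrecaliber_of_cof_le hκ (not_lt.1 hcof)
        (weakPrecaliber_of_precaliber hc)
    · exact fun h => precaliber_of_caliber (caliber_of_aleph0_lt_cof h)
  · constructor
    · intro hc
      by_contra hcof
      exact not_weakPrecaliber_of_cof_le hκ (not_lt.1 hcof) hc
    · exact fun h =>
        weakPrecaliber_of_precaliber (precaliber_of_caliber (caliber_of_aleph0_lt_cof h))
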